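/- For every positive integer n, the semigroup IPF(ℕ^n) of order isomorphisms between principal filters of (ℕ^n, product order) is isomorphic to the semidirect product S_n ⋉_Φ Cⁿ(p,q), where S_n acts on the n-th direct power of the bicyclic monoid by permuting coordinates. -/

import Mathlib

/-- An element of IPF(ℕ^n): a partial bijection of ℕ^n whose source and target are
principal filters and which is an order isomorphism between them. -/
def IsIPF {n : ℕ} (e : PartialEquiv (Fin n → ℕ+) (Fin n → ℕ+)) : Prop :=
  (∃ x, e.source = Set.Ici x) ∧ (∃ y, e.target = Set.Ici y) ∧
    ∀ a ∈ e.source, ∀ b ∈ e.source, a ≤ b ↔ e a ≤ e b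

/-- The bicyclic monoid C(p,q) modelled on ℕ₀ × ℕ₀ with
(i,j)*(k,l) = (i + max{j,k} − j, l + max{j,k} − k). -/
def Bic : Type := ℕ × ℕ

def Bic.mul (a b : ℕ × ℕ) : ℕ × ℕ :=
  (a.1 + max a.2 b.1 - a.2, b.2 + max a.2 b.1 - b.1)

instance : Mul Bic := ⟨Bic.mul⟩

/-- The semidirect product S_n ⋉_Φ Cⁿ(p,q), where S_n acts on the n-th power of the
bicyclic monoid by permuting coordinates: Φ_σ(c) = c ∘ σ⁻¹.  Multiplication is
(σ,c)(τ,d) = (στ, (c)Φ_τ * d); "στ" means "apply σ then τ", which in Mathlib's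
convention for `Equiv.Perm` is `τ * σ`. -/
structure SDP (n : ℕ) where
  perm : Equiv.Perm (Fin n)
  elt : Fin n → Bic

instance (n : ℕ) : Mul (SDP n) :=
  ⟨fun a b => ⟨b.perm * a.perm, fun i => (a.elt (b.perm.symm i) : Bic) * b.elt i⟩⟩

section AuxIPF

variable {n : ℕ}

open Set in
lemma _auxdummy : True := trivial

variable {n : ℕ}

lemma single_mem_Iic {x : Fin n → ℕ} (i : Fin n) :
    (Pi.single i (x i) : Fin n → ℕ) ≤ x := by
  intro m; rcases eq_or_ne m i with rfl | hm
  · simp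
  · simp [Pi.single_eq_of_ne hm]

lemma chain_single (i : Fin n) (k : ℕ) :
    IsChain (· ≤ ·) (Set.Iic (Pi.single i k : Fin n → ℕ)) := by
  intro a ha b hb _
  have ha' : ∀ j, j ≠ i → a j = 0 := fun j hj =>
    Nat.le_zero.mp (by simpa [Pi.single_eq_of_ne hj] using ha j)
  have hb' : ∀ j, j ≠ i → b j = 0 := fun j hj =>
    Nat.le_zero.mp (by simpa [Pi.single_eq_of_ne hj] using hb j)
  rcases le_total (a i) (b i) with h | h
  · left; intro j
    rcases eq_or_ne j i with rfl | hj
    · exact h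
    · simp [ha' j hj]
  · right; intro j
    rcases eq_or_ne j i with rfl | hj
    · exact h
    · simp [hb' j hj]

lemma axis_of_chain (hn : 0 < n) (x : Fin n → ℕ)
    (h : IsChain (· ≤ ·) (Set.Iic x)) : ∃ i, x = Pi.single i (x i) := by
  by_cases hx : ∀ j, x j = 0
  · refine ⟨⟨0, hn⟩, ?_⟩
    funext j
    rcases eq_or_ne j (⟨0, hn⟩ : Fin n) with rfl | hj
    · simp [hx]
    · simp [hx, Pi.single_eq_of_ne hj]
  · push_neg at hx
    obtain ⟨i, hi⟩ := hx
    refine ⟨i, ?_⟩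
    funext j
    rcases eq_or_ne j i with rfl | hj
    · simp
    · rw [Pi.single_eq_of_ne hj]
      by_contra hxj
      have hne : (Pi.single i (x i) : Fin n → ℕ) ≠ Pi.single j (x j) := by
        intro hEq
        have := congrFun hEq i
        rw [Pi.single_eq_same, Pi.single_eq_of_ne (Ne.symm hj)] at this
        exact hi this
      rcases h (single_mem_Iic i) (single_mem_Iic j) hne with hle | hle
      · have := hle i
        rw [Pi.single_eq_same, Pi.single_eq_of_ne (Ne.symm hj)] at this
        exact hi (Nat.le_zero.mp this)
      · have := hle j
        rw [Pi.single_eq_same, Pi.single_eq_of_ne hj] at this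
        exact hxj (Nat.le_zero.mp this)

lemma iso_chain_Iic (G : (Fin n → ℕ) ≃o (Fin n → ℕ)) (x : Fin n → ℕ)
    (h : IsChain (· ≤ ·) (Set.Iic x)) : IsChain (· ≤ ·) (Set.Iic (G x)) := by
  intro a ha b hb hab
  have ha' : G.symm a ≤ x := by
    have := G.symm.monotone ha; simpa using this
  have hb' : G.symm b ≤ x := by
    have := G.symm.monotone hb; simpa using this
  have hne : G.symm a ≠ G.symm b := fun hEq => hab (G.symm.injective.eq_iff.mp hEq ▸ rfl)
  rcases h ha' hb' hne with hle | hle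
  · left; have := G.monotone hle; simpa using this
  · right; have := G.monotone hle; simpa using this

lemma single_le_single {i : Fin n} {a b : ℕ} (h : a ≤ b) :
    (Pi.single i a : Fin n → ℕ) ≤ Pi.single i b := by
  intro m; rcases eq_or_ne m i with rfl | hm
  · simpa using h
  · simp [Pi.single_eq_of_ne hm]

lemma sm_le (f : ℕ → ℕ) (hf : StrictMono f) (k : ℕ) : k ≤ f k := by
  induction k with
  | zero => exact Nat.zero_le _
  | succ k ih => exact Nat.succ_le_of_lt (lt_of_le_of_lt ih (hf (Nat.lt_succ_self k)))

lemma single_lt_single {i : Fin n} {a b : ℕ} (h : a < b) :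
    (Pi.single i a : Fin n → ℕ) < Pi.single i b := by
  refine lt_of_le_of_ne (single_le_single h.le) ?_
  intro hEq
  have := congrFun hEq i
  simp at this; omega

lemma axis_data (hn : 0 < n) (H : (Fin n → ℕ) ≃o (Fin n → ℕ)) :
    ∃ (j : Fin n → Fin n) (g : Fin n → ℕ → ℕ), (∀ i, StrictMono (g i)) ∧
      ∀ i k, H (Pi.single i k) = Pi.single (j i) (g i k) := by
  have hH0 : H 0 = 0 := H.map_bot
  have hax : ∀ i k, ∃ j', H (Pi.single i k) = Pi.single j' (H (Pi.single i k) j') :=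
    fun i k => axis_of_chain hn _ (iso_chain_Iic H _ (chain_single i k))
  choose j0 hj0 using fun i => hax i 1
  have hc1 : ∀ i, 1 ≤ H (Pi.single i 1) (j0 i) := by
    intro i
    by_contra hlt
    have h0 : H (Pi.single i 1) (j0 i) = 0 := by omega
    have : H (Pi.single i 1) = 0 := by rw [hj0 i, h0]; simp
    have : (Pi.single i 1 : Fin n → ℕ) = 0 := by
      apply H.injective; rw [this, hH0]
    have := congrFun this i
    simp at this
  have eqn : ∀ i k, H (Pi.single i k) = Pi.single (j0 i) (H (Pi.single i k) (j0 i)) := by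
    intro i k
    rcases Nat.eq_zero_or_pos k with rfl | hk
    · have : H (Pi.single i 0) = 0 := by
        rw [show (Pi.single i 0 : Fin n → ℕ) = 0 by simp, hH0]
      rw [this]; simp [this]
    · obtain ⟨ja, hja⟩ := hax i k
      have hle : H (Pi.single i 1) ≤ H (Pi.single i k) :=
        H.monotone (single_le_single hk)
      have hji : ja = j0 i := by
        by_contra hne
        have hz : H (Pi.single i k) (j0 i) = 0 := by
          conv_lhs => rw [hja]
          rw [Pi.single_eq_of_ne (Ne.symm hne)]
        have h2 : H (Pi.single i 1) (j0 i) ≤ H (Pi.single i k) (j0 i) := hle (j0 i)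
        rw [hz] at h2
        have := hc1 i; omega
      rw [hji] at hja
      exact hja
  refine ⟨j0, fun i k => H (Pi.single i k) (j0 i), ?_, fun i k => eqn i k⟩
  intro i k k' hkk
  have h1 : H (Pi.single i k) < H (Pi.single i k') := H.strictMono (single_lt_single hkk)
  have hle : H (Pi.single i k) (j0 i) ≤ H (Pi.single i k') (j0 i) := h1.le _
  rcases lt_or_eq_of_le hle with hlt | hEq
  · exact hlt
  · exfalso
    apply h1.ne
    rw [eqn i k, eqn i k', hEq]

lemma sup_single (b : Fin n → ℕ) :
    Finset.univ.sup (fun m => (Pi.single m (b m) : Fin n → ℕ)) = b := by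
  funext i
  rw [Finset.sup_apply]
  apply le_antisymm
  · apply Finset.sup_le
    intro m _
    rcases eq_or_ne i m with rfl | hm
    · simp
    · simp [Pi.single_eq_of_ne hm]
  · have := Finset.le_sup (f := fun m => (Pi.single m (b m) : Fin n → ℕ) i) (Finset.mem_univ i)
    simpa using this

lemma orderIso_map_finset_sup (G : (Fin n → ℕ) ≃o (Fin n → ℕ)) (s : Finset (Fin n))
    (f : Fin n → (Fin n → ℕ)) : G (s.sup f) = s.sup (fun m => G (f m)) := by
  classical
  induction s using Finset.induction_on with
  | empty => simpa using G.map_bot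
  | insert _ _ hx ih => rw [Finset.sup_insert, Finset.sup_insert, G.map_sup, ih]

lemma perm_of_orderIso (hn : 0 < n) (G : (Fin n → ℕ) ≃o (Fin n → ℕ)) :
    ∃ σ : Equiv.Perm (Fin n), ∀ b i, G b i = b (σ.symm i) := by
  obtain ⟨j, g, hgmono, hg⟩ := axis_data hn G
  obtain ⟨j', h, hhmono, hh⟩ := axis_data hn G.symm
  have hji : ∀ i, j' (j i) = i := by
    intro i
    have hE : Pi.single i 1 = (Pi.single (j' (j i)) (h (j i) (g i 1)) : Fin n → ℕ) := by
      conv_lhs => rw [← G.symm_apply_apply (Pi.single i 1), hg, hh]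
    by_contra hne
    have := congrFun hE i
    rw [Pi.single_eq_same, Pi.single_eq_of_ne (fun hq => hne hq.symm)] at this
    exact one_ne_zero this
  have hij : ∀ i, j (j' i) = i := by
    intro i
    have hE : Pi.single i 1 = (Pi.single (j (j' i)) (g (j' i) (h i 1)) : Fin n → ℕ) := by
      conv_lhs => rw [← G.apply_symm_apply (Pi.single i 1), hh, hg]
    by_contra hne
    have := congrFun hE i
    rw [Pi.single_eq_same, Pi.single_eq_of_ne (fun hq => hne hq.symm)] at this
    exact one_ne_zero this
  have hval : ∀ i k, h (j i) (g i k) = k := by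
    intro i k
    have hE : Pi.single i k = (Pi.single (j' (j i)) (h (j i) (g i k)) : Fin n → ℕ) := by
      conv_lhs => rw [← G.symm_apply_apply (Pi.single i k), hg, hh]
    have := congrFun hE i
    rw [hji i] at this
    rw [Pi.single_eq_same, Pi.single_eq_same] at this
    exact this.symm
  have hgid : ∀ i k, g i k = k := by
    intro i k
    have h1 : k ≤ g i k := sm_le _ (hgmono i) k
    have h2 : g i k ≤ h (j i) (g i k) := sm_le _ (hhmono (j i)) _
    rw [hval i k] at h2
    omega
  have hgs : ∀ i k, G (Pi.single i k) = Pi.single (j i) k := by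
    intro i k; rw [hg, hgid]
  refine ⟨⟨j, j', hji, hij⟩, ?_⟩
  intro b i
  show G b i = b (j' i)
  conv_lhs => rw [← sup_single b, orderIso_map_finset_sup]
  rw [Finset.sup_apply]
  simp only [hgs]
  apply le_antisymm
  · apply Finset.sup_le
    intro m _
    rcases eq_or_ne (j m) i with hEq | hne2
    · have hm : m = j' i := by rw [← hEq, hji]
      subst hm
      rw [hEq, Pi.single_eq_same]
    · rw [Pi.single_eq_of_ne (fun hq => hne2 hq.symm)]
      exact Nat.zero_le _
  · have hle := Finset.le_sup (f := fun m => (Pi.single (j m) (b m) : Fin n → ℕ) i)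
      (Finset.mem_univ (j' i))
    have hkey : b (j' i) = (Pi.single (j (j' i)) (b (j' i)) : Fin n → ℕ) i := by
      rw [hij i, Pi.single_eq_same]
    rw [hkey]
    exact Finset.le_sup (f := fun a => (Pi.single (j a) (b a) : Fin n → ℕ) i)
      (Finset.mem_univ (j' i))

lemma classify (hn : 0 < n) (e : PartialEquiv (Fin n → ℕ+) (Fin n → ℕ+)) (he : IsIPF e) :
    ∃ (σ : Equiv.Perm (Fin n)) (x y : Fin n → ℕ+),
      e.source = Set.Ici x ∧ e.target = Set.Ici y ∧
      ∀ a ∈ e.source, ∀ i,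
        (e a i : ℕ) + (x (σ.symm i) : ℕ) = (y i : ℕ) + (a (σ.symm i) : ℕ) := by
  obtain ⟨⟨x, hx⟩, ⟨y, hy⟩, hmono⟩ := he
  have hsrc : ∀ a, a ∈ e.source ↔ x ≤ a := fun a => by rw [hx]; exact Iff.rfl
  have htgt : ∀ c, c ∈ e.target ↔ y ≤ c := fun c => by rw [hy]; exact Iff.rfl
  have hmap : ∀ a ∈ e.source, y ≤ e a := fun a ha => (htgt _).mp (e.map_source ha)
  have hmap' : ∀ c ∈ e.target, x ≤ e.symm c := fun c hc => (hsrc _).mp (e.map_target hc)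
  have hmono' : ∀ c ∈ e.target, ∀ d ∈ e.target, c ≤ d ↔ e.symm c ≤ e.symm d := by
    intro c hc d hd
    have h1 := hmono _ (e.map_target hc) _ (e.map_target hd)
    rw [e.right_inv hc, e.right_inv hd] at h1
    exact h1.symm
  set up : (Fin n → ℕ) → (Fin n → ℕ+) :=
    fun b j => ⟨(x j : ℕ) + b j, by positivity⟩ with hup_def
  set upY : (Fin n → ℕ) → (Fin n → ℕ+) :=
    fun c i => ⟨(y i : ℕ) + c i, by positivity⟩ with hupY_def
  have hup : ∀ b, up b ∈ e.source := by
    intro b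
    rw [hsrc]
    intro j
    show x j ≤ (⟨(x j : ℕ) + b j, _⟩ : ℕ+)
    refine (PNat.coe_le_coe _ _).mp ?_
    exact Nat.le_add_right _ _
  have hupY : ∀ c, upY c ∈ e.target := by
    intro c
    rw [htgt]
    intro i
    show y i ≤ (⟨(y i : ℕ) + c i, _⟩ : ℕ+)
    refine (PNat.coe_le_coe _ _).mp ?_
    exact Nat.le_add_right _ _
  set g : (Fin n → ℕ) → (Fin n → ℕ) := fun b i => (e (up b) i : ℕ) - y i with hg_def
  set g' : (Fin n → ℕ) → (Fin n → ℕ) := fun c m => (e.symm (upY c) m : ℕ) - x m with hg'_def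
  have hupg : ∀ b, upY (g b) = e (up b) := by
    intro b
    funext i
    apply Subtype.ext
    show (y i : ℕ) + ((e (up b) i : ℕ) - y i) = e (up b) i
    have := hmap _ (hup b) i
    rw [← PNat.coe_le_coe] at this
    omega
  have hupg' : ∀ c, up (g' c) = e.symm (upY c) := by
    intro c
    funext m
    apply Subtype.ext
    show (x m : ℕ) + ((e.symm (upY c) m : ℕ) - x m) = e.symm (upY c) m
    have := hmap' _ (hupY c) m
    rw [← PNat.coe_le_coe] at this
    omega
  have hlinv : ∀ b, g' (g b) = b := by
    intro b
    funext m
    show (e.symm (upY (g b)) m : ℕ) - x m = b m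
    rw [hupg, e.left_inv (hup b)]
    show ((x m : ℕ) + b m) - x m = b m
    omega
  have hrinv : ∀ c, g (g' c) = c := by
    intro c
    funext i
    show (e (up (g' c)) i : ℕ) - y i = c i
    rw [hupg', e.right_inv (hupY c)]
    show ((y i : ℕ) + c i) - y i = c i
    omega
  have hrel : ∀ b b' : Fin n → ℕ, g b ≤ g b' ↔ b ≤ b' := by
    intro b b'
    have h1 : up b ≤ up b' ↔ b ≤ b' := by
      constructor
      · intro h j
        have := h j
        rw [← PNat.coe_le_coe] at this
        change (x j : ℕ) + b j ≤ (x j : ℕ) + b' j at this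
        show b j ≤ b' j
        omega
      · intro h j
        rw [← PNat.coe_le_coe]
        change (x j : ℕ) + b j ≤ (x j : ℕ) + b' j
        exact Nat.add_le_add_left (h j) _
    have h2 : e (up b) ≤ e (up b') ↔ up b ≤ up b' := (hmono _ (hup b) _ (hup b')).symm
    have h3 : g b ≤ g b' ↔ e (up b) ≤ e (up b') := by
      constructor
      · intro h i
        have hi := h i
        have hb := hmap _ (hup b) i
        have hb' := hmap _ (hup b') i
        rw [← PNat.coe_le_coe] at hb hb' ⊢
        change (e (up b) i : ℕ) - y i ≤ (e (up b') i : ℕ) - y i at hi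
        omega
      · intro h i
        have hi := h i
        rw [← PNat.coe_le_coe] at hi
        change (e (up b) i : ℕ) - y i ≤ (e (up b') i : ℕ) - y i
        omega
    exact h3.trans (h2.trans h1)
  let G : (Fin n → ℕ) ≃o (Fin n → ℕ) :=
    { toFun := g, invFun := g', left_inv := hlinv, right_inv := hrinv,
      map_rel_iff' := @fun b b' => hrel b b' }
  obtain ⟨σ, hσ⟩ := perm_of_orderIso hn G
  refine ⟨σ, x, y, hx, hy, ?_⟩
  intro a ha i
  have hxa : x ≤ a := (hsrc a).mp ha
  set b : Fin n → ℕ := fun m => (a m : ℕ) - x m with hb_def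
  have hub : up b = a := by
    funext m
    apply Subtype.ext
    show (x m : ℕ) + ((a m : ℕ) - x m) = a m
    have := hxa m
    rw [← PNat.coe_le_coe] at this
    omega
  have hGb : G b i = b (σ.symm i) := hσ b i
  have hGb' : (e a i : ℕ) - y i = (a (σ.symm i) : ℕ) - x (σ.symm i) := by
    have : G b i = (e (up b) i : ℕ) - y i := rfl
    rw [this, hub] at hGb
    rw [hGb]
  have h1 := hmap _ ha i
  have h2 := hxa (σ.symm i)
  rw [← PNat.coe_le_coe] at h1 h2
  omega

def Bic.p (a : Bic) : ℕ := Prod.fst a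
def Bic.q (a : Bic) : ℕ := Prod.snd a

def mkBic (p q : ℕ) : Bic := (p, q)

lemma mkBic_p (p q : ℕ) : (mkBic p q).p = p := rfl
lemma mkBic_q (p q : ℕ) : (mkBic p q).q = q := rfl

lemma Bic.ext' {a b : Bic} (h1 : a.p = b.p) (h2 : a.q = b.q) : a = b := by
  exact Prod.ext h1 h2

lemma Bic.mul_p (a b : Bic) : (a * b).p = a.p + max a.q b.p - a.q := rfl
lemma Bic.mul_q (a b : Bic) : (a * b).q = b.q + max a.q b.p - b.p := rfl

lemma SDP.ext' {a b : SDP n} (h1 : a.perm = b.perm) (h2 : a.elt = b.elt) : a = b := by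
  cases a; cases b; cases h1; cases h2; rfl

lemma SDP.mul_perm (a b : SDP n) : (a * b).perm = b.perm * a.perm := rfl
lemma SDP.mul_elt (a b : SDP n) (i : Fin n) :
    (a * b).elt i = a.elt (b.perm.symm i) * b.elt i := rfl

lemma perm_mul_symm (σ τ : Equiv.Perm (Fin n)) (i : Fin n) :
    (τ * σ).symm i = σ.symm (τ.symm i) := rfl

lemma perm_mul_apply (σ τ : Equiv.Perm (Fin n)) (m : Fin n) :
    (τ * σ) m = τ (σ m) := rfl

/-- the minimum of the source filter of the canonical map of `s` -/
def XF (s : SDP n) : Fin n → ℕ+ := fun m => ⟨(s.elt (s.perm m)).p + 1, Nat.succ_pos _⟩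

/-- the minimum of the target filter -/
def YF (s : SDP n) : Fin n → ℕ+ := fun i => ⟨(s.elt i).q + 1, Nat.succ_pos _⟩

lemma XF_coe (s : SDP n) (m : Fin n) : (XF s m : ℕ) = (s.elt (s.perm m)).p + 1 := rfl
lemma YF_coe (s : SDP n) (i : Fin n) : (YF s i : ℕ) = (s.elt i).q + 1 := rfl

def fwd (s : SDP n) (a : Fin n → ℕ+) : Fin n → ℕ+ := fun i =>
  ⟨max 1 ((a (s.perm.symm i) : ℕ) + (YF s i : ℕ) - (XF s (s.perm.symm i) : ℕ)),
    Nat.lt_of_lt_of_le Nat.one_pos (le_max_left _ _)⟩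

def bwd (s : SDP n) (b : Fin n → ℕ+) : Fin n → ℕ+ := fun m =>
  ⟨max 1 ((b (s.perm m) : ℕ) + (XF s m : ℕ) - (YF s (s.perm m) : ℕ)),
    Nat.lt_of_lt_of_le Nat.one_pos (le_max_left _ _)⟩

lemma fwd_coe (s : SDP n) (a : Fin n → ℕ+) (i : Fin n) :
    (fwd s a i : ℕ) = max 1 ((a (s.perm.symm i) : ℕ) + (YF s i : ℕ) - (XF s (s.perm.symm i) : ℕ)) :=
  rfl

lemma bwd_coe (s : SDP n) (b : Fin n → ℕ+) (m : Fin n) :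
    (bwd s b m : ℕ) = max 1 ((b (s.perm m) : ℕ) + (XF s m : ℕ) - (YF s (s.perm m) : ℕ)) :=
  rfl

lemma pone (t : ℕ+) : 1 ≤ (t : ℕ) := t.property

lemma pile {a b : Fin n → ℕ+} : a ≤ b ↔ ∀ i, (a i : ℕ) ≤ (b i : ℕ) := by
  constructor
  · intro h i; exact (PNat.coe_le_coe _ _).mpr (h i)
  · intro h i; exact (PNat.coe_le_coe _ _).mp (h i)

def toMap (s : SDP n) : PartialEquiv (Fin n → ℕ+) (Fin n → ℕ+) where
  toFun := fwd s
  invFun := bwd s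
  source := Set.Ici (XF s)
  target := Set.Ici (YF s)
  map_source' := by
    intro a ha
    rw [Set.mem_Ici, pile] at ha ⊢
    intro i
    have h1 := ha (s.perm.symm i)
    rw [fwd_coe]
    have h2 := pone (YF s i)
    omega
  map_target' := by
    intro b hb
    rw [Set.mem_Ici, pile] at hb ⊢
    intro m
    have h1 := hb (s.perm m)
    rw [bwd_coe]
    have h2 := pone (XF s m)
    omega
  left_inv' := by
    intro a ha
    rw [Set.mem_Ici, pile] at ha
    funext m
    refine PNat.coe_injective ?_
    show (bwd s (fwd s a) m : ℕ) = (a m : ℕ)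
    rw [bwd_coe, fwd_coe, Equiv.symm_apply_apply]
    have h1 := ha m
    have h2 := pone (YF s (s.perm m))
    have h3 := pone (XF s m)
    omega
  right_inv' := by
    intro b hb
    rw [Set.mem_Ici, pile] at hb
    funext i
    refine PNat.coe_injective ?_
    show (fwd s (bwd s b) i : ℕ) = (b i : ℕ)
    rw [fwd_coe, bwd_coe, Equiv.apply_symm_apply]
    have h1 := hb i
    have h2 := pone (YF s i)
    have h3 := pone (XF s (s.perm.symm i))
    omega

lemma toMap_source (s : SDP n) : (toMap s).source = Set.Ici (XF s) := rfl
lemma toMap_target (s : SDP n) : (toMap s).target = Set.Ici (YF s) := rfl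

lemma toMap_formula (s : SDP n) :
    ∀ a ∈ (toMap s).source, ∀ i,
      ((toMap s) a i : ℕ) + (XF s (s.perm.symm i) : ℕ)
        = (YF s i : ℕ) + (a (s.perm.symm i) : ℕ) := by
  intro a ha i
  rw [toMap_source, Set.mem_Ici, pile] at ha
  have h1 := ha (s.perm.symm i)
  have h2 := pone (YF s i)
  show (fwd s a i : ℕ) + (XF s (s.perm.symm i) : ℕ) = (YF s i : ℕ) + (a (s.perm.symm i) : ℕ)
  rw [fwd_coe]
  omega

lemma toMap_isIPF (s : SDP n) : IsIPF (toMap s) := by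
  refine ⟨⟨XF s, rfl⟩, ⟨YF s, rfl⟩, ?_⟩
  intro a ha b hb
  rw [toMap_source, Set.mem_Ici, pile] at ha hb
  rw [pile, pile]
  constructor
  · intro h i
    show (fwd s a i : ℕ) ≤ (fwd s b i : ℕ)
    rw [fwd_coe, fwd_coe]
    have := h (s.perm.symm i)
    omega
  · intro h m
    have hi : (fwd s a (s.perm m) : ℕ) ≤ (fwd s b (s.perm m) : ℕ) := h (s.perm m)
    rw [fwd_coe, fwd_coe, Equiv.symm_apply_apply] at hi
    have h1 := ha m
    have h2 := hb m
    have h3 := pone (YF s (s.perm m))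
    have h4 := pone (XF s m)
    omega

lemma sigma_unique (e : PartialEquiv (Fin n → ℕ+) (Fin n → ℕ+)) (x y : Fin n → ℕ+)
    (hx : e.source = Set.Ici x) (σ τ : Equiv.Perm (Fin n))
    (hσ : ∀ a ∈ e.source, ∀ i,
      (e a i : ℕ) + (x (σ.symm i) : ℕ) = (y i : ℕ) + (a (σ.symm i) : ℕ))
    (hτ : ∀ a ∈ e.source, ∀ i,
      (e a i : ℕ) + (x (τ.symm i) : ℕ) = (y i : ℕ) + (a (τ.symm i) : ℕ)) :
    σ = τ := by
  have hsymm : ∀ i, σ.symm i = τ.symm i := by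
    intro i
    by_contra hne
    set a : Fin n → ℕ+ := fun j => if j = σ.symm i then x j + 1 else x j with ha_def
    have hcoe : ∀ j, (a j : ℕ) = if j = σ.symm i then (x j : ℕ) + 1 else (x j : ℕ) := by
      intro j
      by_cases hj : j = σ.symm i
      · simp [ha_def, hj, PNat.add_coe, PNat.one_coe]
      · simp [ha_def, hj]
    have haS : a ∈ e.source := by
      rw [hx, Set.mem_Ici, pile]
      intro j
      rw [hcoe]
      by_cases hj : j = σ.symm i <;> simp [hj]
    have h1 := hσ a haS i
    have h2 := hτ a haS i
    have e1 : (a (σ.symm i) : ℕ) = (x (σ.symm i) : ℕ) + 1 := by rw [hcoe]; simp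
    have e2 : (a (τ.symm i) : ℕ) = (x (τ.symm i) : ℕ) := by
      rw [hcoe, if_neg (Ne.symm hne)]
    rw [e1] at h1
    rw [e2] at h2
    omega
  have h := Equiv.ext hsymm
  rw [← Equiv.symm_symm σ, h, Equiv.symm_symm]

lemma trans_equiv (e f : PartialEquiv (Fin n → ℕ+) (Fin n → ℕ+))
    (σ τ : Equiv.Perm (Fin n)) (xe ye xf yf : Fin n → ℕ+)
    (hxe : e.source = Set.Ici xe) (hxf : f.source = Set.Ici xf)
    (hfe : ∀ a ∈ e.source, ∀ i,
      (e a i : ℕ) + (xe (σ.symm i) : ℕ) = (ye i : ℕ) + (a (σ.symm i) : ℕ))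
    (hff : ∀ a ∈ f.source, ∀ i,
      (f a i : ℕ) + (xf (τ.symm i) : ℕ) = (yf i : ℕ) + (a (τ.symm i) : ℕ)) :
    toMap ((⟨σ, fun i => mkBic ((xe (σ.symm i) : ℕ) - 1) ((ye i : ℕ) - 1)⟩ : SDP n) *
        (⟨τ, fun i => mkBic ((xf (τ.symm i) : ℕ) - 1) ((yf i : ℕ) - 1)⟩ : SDP n))
      ≈ e.trans f := by
  set A : SDP n := ⟨σ, fun i => mkBic ((xe (σ.symm i) : ℕ) - 1) ((ye i : ℕ) - 1)⟩ with hA_def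
  set B : SDP n := ⟨τ, fun i => mkBic ((xf (τ.symm i) : ℕ) - 1) ((yf i : ℕ) - 1)⟩ with hB_def
  set s : SDP n := A * B with hs_def
  have hA : ∀ k, A.elt k = mkBic ((xe (σ.symm k) : ℕ) - 1) ((ye k : ℕ) - 1) := fun _ => rfl
  have hB : ∀ k, B.elt k = mkBic ((xf (τ.symm k) : ℕ) - 1) ((yf k : ℕ) - 1) := fun _ => rfl
  have hselt : ∀ k, s.elt k = A.elt (τ.symm k) * B.elt k := fun _ => rfl
  have hp1 : ∀ m, s.perm m = τ (σ m) := fun _ => rfl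
  have hp2 : ∀ i, s.perm.symm i = σ.symm (τ.symm i) := fun _ => rfl
  have hXF : ∀ m, (XF s m : ℕ) =
      ((xe m : ℕ) - 1) + max ((ye (σ m) : ℕ) - 1) ((xf (σ m) : ℕ) - 1)
        - ((ye (σ m) : ℕ) - 1) + 1 := by
    intro m
    rw [XF_coe]
    simp only [hselt, hp1, hA, hB, Equiv.symm_apply_apply, Bic.mul_p, mkBic_p, mkBic_q]
  have hYF : ∀ i, (YF s i : ℕ) =
      ((yf i : ℕ) - 1) + max ((ye (τ.symm i) : ℕ) - 1) ((xf (τ.symm i) : ℕ) - 1)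
        - ((xf (τ.symm i) : ℕ) - 1) + 1 := by
    intro i
    rw [YF_coe]
    simp only [hselt, hA, hB, Equiv.symm_apply_apply, Bic.mul_q, mkBic_p, mkBic_q]
  have hsrc : (toMap s).source = (e.trans f).source := by
    rw [PartialEquiv.trans_source, toMap_source, hxe, hxf]
    ext r
    simp only [Set.mem_inter_iff, Set.mem_preimage, Set.mem_Ici]
    constructor
    · intro hr
      rw [pile] at hr
      have hrx : xe ≤ r := by
        rw [pile]
        intro m
        have h1 := hr m
        rw [hXF] at h1
        have := pone (xe m); have := pone (ye (σ m)); have := pone (xf (σ m))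
        omega
      refine ⟨hrx, ?_⟩
      rw [pile]
      intro i
      have hrsrc : r ∈ e.source := by rw [hxe]; exact hrx
      have hf := hfe r hrsrc i
      have h1 := hr (σ.symm i)
      rw [hXF, Equiv.apply_symm_apply] at h1
      have := pone (xe (σ.symm i)); have := pone (ye i); have := pone (xf i)
      omega
    · rintro ⟨hrx, hrf⟩
      have hrsrc : r ∈ e.source := by rw [hxe]; exact hrx
      rw [pile]
      intro m
      rw [hXF]
      have hf := hfe r hrsrc (σ m)
      rw [Equiv.symm_apply_apply] at hf
      have h2 := pile.1 hrf (σ m)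
      have h3 := pile.1 hrx m
      have := pone (xe m); have := pone (ye (σ m)); have := pone (xf (σ m))
      omega
  show PartialEquiv.EqOnSource _ _
  refine ⟨hsrc, ?_⟩
  intro r hr
  have htr : r ∈ (e.trans f).source := by rw [← hsrc]; exact hr
  rw [PartialEquiv.trans_source] at htr
  have hre : r ∈ e.source := htr.1
  have herf : e r ∈ f.source := htr.2
  show toMap s r = (e.trans f) r
  have htapp : (e.trans f) r = f (e r) := rfl
  rw [htapp]
  funext i
  refine PNat.coe_injective ?_
  show (fwd s r i : ℕ) = (f (e r) i : ℕ)
  rw [fwd_coe, hp2]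
  have hf1 := hff (e r) herf i
  have hf2 := hfe r hre (τ.symm i)
  have hr' : (XF s (σ.symm (τ.symm i)) : ℕ) ≤ (r (σ.symm (τ.symm i)) : ℕ) := by
    have := pile.1 hr (σ.symm (τ.symm i))
    rw [toMap_source] at *
    exact this
  rw [hXF, Equiv.apply_symm_apply] at hr'
  rw [hYF, hXF, Equiv.apply_symm_apply]
  have hefx : (xf (τ.symm i) : ℕ) ≤ ((e r) (τ.symm i) : ℕ) := by
    have : e r ∈ Set.Ici xf := by rw [← hxf]; exact herf
    exact pile.1 this (τ.symm i)
  have := pone (xe (σ.symm (τ.symm i))); have := pone (ye (τ.symm i))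
  have := pone (xf (τ.symm i)); have := pone (yf i)
  omega


end AuxIPF

/-- IPF(ℕ^n) is isomorphic to the semidirect product S_n ⋉_Φ Cⁿ(p,q):
there is a map Ψ from IPF(ℕ^n) onto the semidirect product which identifies exactly
the partial maps that are equal as partial maps (`≈`, EqOnSource) and transforms
composition of partial maps into the semidirect-product multiplication. -/



theorem stmt16 (n : ℕ) (hn : 0 < n) :
    ∃ Ψ : {e : PartialEquiv (Fin n → ℕ+) (Fin n → ℕ+) // IsIPF e} → SDP n,
      Function.Surjective Ψ ∧
      (∀ a b, Ψ a = Ψ b ↔ a.1 ≈ b.1) ∧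
      (∀ a b c, c.1 ≈ a.1.trans b.1 → Ψ c = Ψ a * Ψ b) := by
  classical
  choose σ x y hx hy hfor using
    fun (p : {e : PartialEquiv (Fin n → ℕ+) (Fin n → ℕ+) // IsIPF e}) => classify hn p.1 p.2
  set Ψ : {e : PartialEquiv (Fin n → ℕ+) (Fin n → ℕ+) // IsIPF e} → SDP n :=
    fun p => ⟨σ p, fun i => mkBic ((x p ((σ p).symm i) : ℕ) - 1) ((y p i : ℕ) - 1)⟩ with hΨ
  have hPsiMap : ∀ s : SDP n, Ψ ⟨toMap s, toMap_isIPF s⟩ = s := by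
    intro s
    set p : {e : PartialEquiv (Fin n → ℕ+) (Fin n → ℕ+) // IsIPF e} :=
      ⟨toMap s, toMap_isIPF s⟩ with hp
    have hxs : x p = XF s := Set.Ici_injective ((hx p).symm.trans (toMap_source s))
    have hys : y p = YF s := Set.Ici_injective ((hy p).symm.trans (toMap_target s))
    have hforp : ∀ a ∈ (toMap s).source, ∀ i,
        ((toMap s) a i : ℕ) + (XF s ((σ p).symm i) : ℕ)
          = (YF s i : ℕ) + (a ((σ p).symm i) : ℕ) := by
      intro a ha i
      have h := hfor p a ha i
      rwa [hxs, hys] at h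
    have hσs : σ p = s.perm :=
      sigma_unique (toMap s) (XF s) (YF s) (toMap_source s) (σ p) s.perm hforp (toMap_formula s)
    apply SDP.ext'
    · exact hσs
    · funext i
      apply Bic.ext'
      · show ((x p ((σ p).symm i) : ℕ) - 1) = (s.elt i).p
        rw [hxs, hσs, XF_coe, Equiv.apply_symm_apply]
        omega
      · show ((y p i : ℕ) - 1) = (s.elt i).q
        rw [hys, YF_coe]
        omega
  have hpart2 : ∀ a b, Ψ a = Ψ b ↔ a.1 ≈ b.1 := by
    intro a b
    constructor
    · intro hEq
      have hperm : σ a = σ b := congrArg SDP.perm hEq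
      have hxab : x a = x b := by
        funext m
        refine PNat.coe_injective ?_
        have hp : ((Ψ a).elt (σ a m)).p = ((Ψ b).elt (σ a m)).p :=
          congrArg (fun t => (t.elt (σ a m)).p) hEq
        have ea : ((Ψ a).elt (σ a m)).p = (x a ((σ a).symm (σ a m)) : ℕ) - 1 := rfl
        have eb : ((Ψ b).elt (σ a m)).p = (x b ((σ b).symm (σ a m)) : ℕ) - 1 := rfl
        rw [ea, eb] at hp
        simp only [← hperm, Equiv.symm_apply_apply] at hp
        have := pone (x a m); have := pone (x b m)
        omega
      have hyab : y a = y b := by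
        funext i
        refine PNat.coe_injective ?_
        have hq : ((Ψ a).elt i).q = ((Ψ b).elt i).q :=
          congrArg (fun t => (t.elt i).q) hEq
        have ea : ((Ψ a).elt i).q = (y a i : ℕ) - 1 := rfl
        have eb : ((Ψ b).elt i).q = (y b i : ℕ) - 1 := rfl
        rw [ea, eb] at hq
        have := pone (y a i); have := pone (y b i)
        omega
      show PartialEquiv.EqOnSource _ _
      refine ⟨by rw [hx a, hx b, hxab], ?_⟩
      intro v hv
      have hv' : v ∈ b.1.source := by
        rw [hx b, ← hxab, ← hx a]
        exact hv
      funext i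
      refine PNat.coe_injective ?_
      have h1 := hfor a v hv i
      have h2 := hfor b v hv' i
      rw [← hxab, ← hyab, ← hperm] at h2
      omega
    · intro hab
      have hsrcEq : a.1.source = b.1.source := hab.1
      have htgtEq : a.1.target = b.1.target := PartialEquiv.EqOnSource.target_eq hab
      have hxab : x a = x b := Set.Ici_injective (by rw [← hx a, ← hx b, hsrcEq])
      have hyab : y a = y b := Set.Ici_injective (by rw [← hy a, ← hy b, htgtEq])
      have hforb : ∀ v ∈ a.1.source, ∀ i,
          (a.1 v i : ℕ) + (x a ((σ b).symm i) : ℕ)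
            = (y a i : ℕ) + (v ((σ b).symm i) : ℕ) := by
        intro v hv i
        have hv' : v ∈ b.1.source := by rw [← hsrcEq]; exact hv
        have h2 := hfor b v hv' i
        rw [← hxab, ← hyab] at h2
        have hvv : b.1 v = a.1 v := (hab.2 hv).symm
        rw [hvv] at h2
        exact h2
      have hperm : σ a = σ b :=
        sigma_unique a.1 (x a) (y a) (hx a) (σ a) (σ b) (hfor a) hforb
      apply SDP.ext'
      · exact hperm
      · funext i
        apply Bic.ext'
        · show ((x a ((σ a).symm i) : ℕ) - 1) = ((x b ((σ b).symm i) : ℕ) - 1)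
          rw [hxab, hperm]
        · show ((y a i : ℕ) - 1) = ((y b i : ℕ) - 1)
          rw [hyab]
  refine ⟨Ψ, ?_, hpart2, ?_⟩
  · intro s
    exact ⟨⟨toMap s, toMap_isIPF s⟩, hPsiMap s⟩
  · intro p q c hc
    have hkey : toMap (Ψ p * Ψ q) ≈ p.1.trans q.1 :=
      trans_equiv p.1 q.1 (σ p) (σ q) (x p) (y p) (x q) (y q) (hx p) (hx q) (hfor p) (hfor q)
    have hc2 : c.1 ≈ toMap (Ψ p * Ψ q) := Setoid.trans hc (Setoid.symm hkey)
    exact ((hpart2 c ⟨toMap (Ψ p * Ψ q), toMap_isIPF _⟩).mpr hc2).trans (hPsiMap _)
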